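/- Let L : C → ℝ_{>0} be a function on an open convex cone C ⊂ ℝ^n that is homogeneous of degree −1, i.e., L(cz) = c^{−1} L(z) for all c > 0 and z ∈ C. If the sublevel region { z ∈ C : L(z) ≤ 1 } is convex, then 1/L is concave on C, and consequently L is convex on C. -/

import Mathlib

/-- Let `L : C → ℝ_{>0}` be homogeneous of degree `-1` on an open convex cone
`C ⊂ ℝ^n`, i.e. `L (c • z) = L z / c` for `c > 0`. If the sublevel region
`{ z ∈ C : L z ≤ 1 }` is convex, then `1/L` is concave on `C` and consequently `L`
is convex on `C`. -/
theorem homogeneous_sublevel_convex_implies_convex (n : ℕ)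
    (C : Set (Fin n → ℝ)) (hopen : IsOpen C) (hconv : Convex ℝ C)
    (hcone : ∀ z ∈ C, ∀ c : ℝ, 0 < c → c • z ∈ C)
    (L : (Fin n → ℝ) → ℝ)
    (hpos : ∀ z ∈ C, 0 < L z)
    (hhom : ∀ z ∈ C, ∀ c : ℝ, 0 < c → L (c • z) = L z / c)
    (hsub : Convex ℝ {z | z ∈ C ∧ L z ≤ 1}) :
    ConcaveOn ℝ C (fun z => 1 / L z) ∧ ConvexOn ℝ C L := by
  have key : ∀ z1 ∈ C, ∀ z2 ∈ C, ∀ s : ℝ, 0 < s → s < 1 →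
      s / L z1 + (1 - s) / L z2 ≤ 1 / L (s • z1 + (1 - s) • z2) := by
    intro z1 h1 z2 h2 s hs hs1
    have hL1 := hpos z1 h1
    have hL2 := hpos z2 h2
    have hs1' : 0 < 1 - s := by linarith
    set t := s / L z1 + (1 - s) / L z2 with ht
    have ht0 : 0 < t := by positivity
    have hw : s • z1 + (1 - s) • z2 ∈ C :=
      hconv h1 h2 hs.le hs1'.le (by ring)
    have hu1 : L z1 • z1 ∈ {z | z ∈ C ∧ L z ≤ 1} := by
      refine ⟨hcone _ h1 _ hL1, ?_⟩
      rw [hhom z1 h1 _ hL1]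
      exact le_of_eq (div_self hL1.ne')
    have hu2 : L z2 • z2 ∈ {z | z ∈ C ∧ L z ≤ 1} := by
      refine ⟨hcone _ h2 _ hL2, ?_⟩
      rw [hhom z2 h2 _ hL2]
      exact le_of_eq (div_self hL2.ne')
    have hmem := hsub hu1 hu2 (a := s / (L z1 * t)) (b := (1 - s) / (L z2 * t))
      (by positivity) (by positivity)
      (by field_simp; rw [ht]; field_simp)
    have heq : (s / (L z1 * t)) • (L z1 • z1) + ((1 - s) / (L z2 * t)) • (L z2 • z2)
        = (1 / t) • (s • z1 + (1 - s) • z2) := by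
      rw [smul_add, smul_smul, smul_smul, smul_smul, smul_smul]
      congr 1 <;> congr 1 <;> field_simp <;> ring
    rw [heq] at hmem
    have := hmem.2
    rw [hhom _ hw _ (by positivity : (0:ℝ) < 1 / t)] at this
    rw [div_div_eq_mul_div, div_one] at this
    have hLw := hpos _ hw
    rw [le_div_iff₀ hLw]
    nlinarith
  have hconc : ConcaveOn ℝ C (fun z => 1 / L z) := by
    refine ⟨hconv, ?_⟩
    intro z1 h1 z2 h2 a b ha hb hab
    rcases eq_or_lt_of_le ha with rfl | ha'
    · simp at hab; subst hab; simp
    rcases eq_or_lt_of_le hb with rfl | hb'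
    · simp at hab; subst hab; simp
    have hb_eq : b = 1 - a := by linarith
    subst hb_eq
    simpa [div_eq_mul_inv] using key z1 h1 z2 h2 a ha' (by linarith)
  refine ⟨hconc, hconv, ?_⟩
  intro z1 h1 z2 h2 a b ha hb hab
  rcases eq_or_lt_of_le ha with rfl | ha'
  · simp at hab; subst hab; simp
  rcases eq_or_lt_of_le hb with rfl | hb'
  · simp at hab; subst hab; simp
  have hb_eq : b = 1 - a := by linarith
  subst hb_eq
  have hk := key z1 h1 z2 h2 a ha' (by linarith)
  have hL1 := hpos z1 h1
  have hL2 := hpos z2 h2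
  have hw : a • z1 + (1 - a) • z2 ∈ C := hconv h1 h2 ha (by linarith) (by ring)
  have hLw := hpos _ hw
  have ht0 : 0 < a / L z1 + (1 - a) / L z2 := by positivity
  rw [le_div_iff₀ hLw] at hk
  have hamhm : 1 ≤ (a / L z1 + (1 - a) / L z2) * (a * L z1 + (1 - a) * L z2) := by
    have e1 : a / L z1 * L z1 = a := by field_simp
    have e2 : (1 - a) / L z2 * L z2 = 1 - a := by field_simp
    have h3 : 0 ≤ a * (1 - a) * (L z1 - L z2)^2 / (L z1 * L z2) := by positivity
    have expand : (a / L z1 + (1 - a) / L z2) * (a * L z1 + (1 - a) * L z2)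
        = a^2 + (1-a)^2 + a * (1 - a) * ((L z1)^2 + (L z2)^2) / (L z1 * L z2) := by
      field_simp; ring
    have h5 : 2 * (L z1 * L z2) ≤ L z1 ^ 2 + L z2 ^ 2 := by nlinarith [sq_nonneg (L z1 - L z2)]
    have h6 : 2 * (a * (1 - a)) ≤ a * (1 - a) * (L z1 ^ 2 + L z2 ^ 2) / (L z1 * L z2) := by
      rw [le_div_iff₀ (mul_pos hL1 hL2)]
      nlinarith [mul_pos ha' (by linarith : (0:ℝ) < 1 - a)]
    nlinarith [expand, h6, sq_nonneg (a - (1 - a))]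
  have h7 : (a / L z1 + (1 - a) / L z2) * L (a • z1 + (1 - a) • z2)
      ≤ (a / L z1 + (1 - a) / L z2) * (a * L z1 + (1 - a) * L z2) := by linarith
  have h8 := le_of_mul_le_mul_left h7 ht0
  simpa [smul_eq_mul] using h8
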